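/- For all finite families x₁, …, x_l ∈ ℝᵐ, y₁, …, y_l, y ∈ ℝⁿ, and weights λ₁, …, λ_l ≥ 0 with Σᵢ λᵢ = 1, setting Φ(x, y, y') = ‖x‖² + 2⟨x, y − y'⟩ and x̄ = Σⱼ λⱼxⱼ, one has the equality Σ_{i,j} λᵢλⱼ Φ(xᵢ − xⱼ, yᵢ, yⱼ) = 2 Σᵢ λᵢ Φ(xᵢ − x̄, yᵢ, y). In particular, Φ : ℝᵐ × ℝⁿ × ℝⁿ → ℝ defined by Φ(x, y, y') = ‖x‖² + 2⟨x, y − y'⟩ is a K-function. -/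

import Mathlib

open scoped RealInnerProductSpace

private lemma pull1 {l : ℕ} (r : ℝ) (f g : Fin l → ℝ) (h : ∀ i, f i = r * g i) :
    ∑ i, f i = r * ∑ i, g i := by
  rw [Finset.mul_sum]; exact Finset.sum_congr rfl fun i _ => h i

private lemma pull2 {l : ℕ} (r : ℝ) (f g : Fin l → Fin l → ℝ)
    (h : ∀ i j, f i j = r * g i j) :
    ∑ i, ∑ j, f i j = r * ∑ i, ∑ j, g i j := by
  rw [Finset.mul_sum]
  exact Finset.sum_congr rfl fun i _ => pull1 r _ _ (h i)

private lemma pull3 {l : ℕ} (r : ℝ) (f g : Fin l → Fin l → Fin l → ℝ)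
    (h : ∀ i j k, f i j k = r * g i j k) :
    ∑ i, ∑ j, ∑ k, f i j k = r * ∑ i, ∑ j, ∑ k, g i j k := by
  rw [Finset.mul_sum]
  exact Finset.sum_congr rfl fun i _ => pull2 r _ _ (h i)

private lemma key (l : ℕ) (lam : Fin l → ℝ) (A B : Fin l → Fin l → ℝ) (c : Fin l → ℝ)
    (hsum : ∑ i, lam i = 1) :
    ∑ i, ∑ j, lam i * lam j *
        ((A i i - A i j - A j i + A j j) + 2*(B i i - B i j - B j i + B j j)) =
    2 * ∑ i, lam i *
        ((A i i - ∑ j, lam j * A i j - ∑ j, lam j * A j i + ∑ j, lam j * ∑ k, lam k * A j k)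
          + 2*(B i i - c i - ∑ j, lam j * B j i + ∑ j, lam j * c j)) := by
  have h1 : ∀ (f : Fin l → ℝ), ∑ i, ∑ j, lam i * lam j * f i = ∑ i, lam i * f i := by
    intro f
    simp_rw [show ∀ i j : Fin l, lam i * lam j * f i = (lam i * f i) * lam j from
      fun i j => by ring, ← Finset.mul_sum, hsum, mul_one]
  have h2 : ∀ (f : Fin l → ℝ), ∑ i, ∑ j, lam i * lam j * f j = ∑ j, lam j * f j := by
    intro f
    simp_rw [mul_assoc, ← Finset.mul_sum, ← Finset.sum_mul, hsum, one_mul]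
  have hswapA : ∑ i, ∑ j, lam i * lam j * A j i = ∑ i, ∑ j, lam i * lam j * A i j := by
    rw [Finset.sum_comm]
    exact Finset.sum_congr rfl fun i _ => Finset.sum_congr rfl fun j _ => by ring
  have hswapB : ∑ i, ∑ j, lam i * lam j * B j i = ∑ i, ∑ j, lam i * lam j * B i j := by
    rw [Finset.sum_comm]
    exact Finset.sum_congr rfl fun i _ => Finset.sum_congr rfl fun j _ => by ring
  have htriple : ∑ i, ∑ j, ∑ k, lam i * (lam j * (lam k * A j k)) =
      ∑ i, ∑ j, lam i * lam j * A i j := by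
    simp_rw [← Finset.mul_sum, ← Finset.sum_mul, hsum, one_mul]
    simp [Finset.mul_sum, mul_assoc]
  simp only [mul_add, mul_sub, Finset.sum_add_distrib, Finset.sum_sub_distrib,
    Finset.mul_sum]
  rw [h1 (fun i => A i i), h2 (fun j => A j j)]
  rw [h1 (fun i => 2 * B i i), h2 (fun j => 2 * B j j)]
  ring_nf
  have e1 : ∑ x, lam x * B x x * 2 = 2 * ∑ x, lam x * B x x :=
    pull1 2 _ _ (fun i => by ring)
  have e2 : ∑ x, ∑ y, lam x * lam y * 2 * B x y = 2 * ∑ x, ∑ y, lam x * lam y * B x y :=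
    pull2 2 _ _ (fun i j => by ring)
  have e3 : ∑ x, ∑ y, lam x * lam y * 2 * B y x = 2 * ∑ x, ∑ y, lam x * lam y * B y x :=
    pull2 2 _ _ (fun i j => by ring)
  have e4 : ∑ x, lam x * 2 * B x x = 2 * ∑ x, lam x * B x x :=
    pull1 2 _ _ (fun i => by ring)
  have e5 : ∑ x, 2 * lam x * A x x = 2 * ∑ x, lam x * A x x :=
    pull1 2 _ _ (fun i => by ring)
  have e6 : ∑ x, ∑ y, 2 * lam x * lam y * A x y = 2 * ∑ x, ∑ y, lam x * lam y * A x y :=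
    pull2 2 _ _ (fun i j => by ring)
  have e7 : ∑ x, ∑ y, 2 * lam x * lam y * A y x = 2 * ∑ x, ∑ y, lam x * lam y * A y x :=
    pull2 2 _ _ (fun i j => by ring)
  have e8 : ∑ x, ∑ y, ∑ z, 2 * lam x * lam y * lam z * A y z =
      2 * ∑ x, ∑ y, ∑ z, lam x * (lam y * (lam z * A y z)) :=
    pull3 2 _ _ (fun i j k => by ring)
  have e9 : ∑ x, 2 * lam x * 2 * B x x = 4 * ∑ x, lam x * B x x :=
    pull1 4 _ _ (fun i => by ring)
  have e10 : ∑ x, 2 * lam x * c x * 2 = 4 * ∑ x, lam x * c x :=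
    pull1 4 _ _ (fun i => by ring)
  have e11 : ∑ x, ∑ y, 2 * lam x * 2 * lam y * B y x = 4 * ∑ x, ∑ y, lam x * lam y * B y x :=
    pull2 4 _ _ (fun i j => by ring)
  have e12 : ∑ x, ∑ y, 2 * lam x * 2 * lam y * c y = 4 * ∑ x, ∑ y, lam x * lam y * c y :=
    pull2 4 _ _ (fun i j => by ring)
  have hc := h2 c
  ring_nf at e1 e2 e3 e4 e5 e6 e7 e8 e9 e10 e11 e12 hswapA hswapB htriple hc ⊢
  linear_combination e1 - e2 - e3 + e4 - e5 + e6 + e7 - e8 - e9 + e10 + e11 - e12 +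
    hswapA + 2 * hswapB - 2 * htriple - 4 * hc

/-- A `K`-function in the sense of Minty (all three variables in `ℝᵐ`):
lower semicontinuous and convex in the first variable, and satisfying the
averaging inequality. -/
def IsKFunction (m : ℕ)
    (Φ : EuclideanSpace ℝ (Fin m) → EuclideanSpace ℝ (Fin m) → EuclideanSpace ℝ (Fin m) → ℝ) :
    Prop :=
  (∀ y y' : EuclideanSpace ℝ (Fin m),
      LowerSemicontinuous (fun x => Φ x y y') ∧
      ConvexOn ℝ Set.univ (fun x => Φ x y y')) ∧
  (∀ (l : ℕ) (x : Fin l → EuclideanSpace ℝ (Fin m))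
      (yv : Fin l → EuclideanSpace ℝ (Fin m)) (lam : Fin l → ℝ),
    (∀ i, 0 ≤ lam i) → (∑ i, lam i = 1) →
    ∀ y : EuclideanSpace ℝ (Fin m),
      ∑ i, ∑ j, lam i * lam j * Φ (x i - x j) (yv i) (yv j) ≥
        2 * ∑ i, lam i * Φ (x i - ∑ j, lam j • x j) (yv i) y)

theorem stmt_15 (m : ℕ)
    (Φ : EuclideanSpace ℝ (Fin m) → EuclideanSpace ℝ (Fin m) → EuclideanSpace ℝ (Fin m) → ℝ)
    (hΦ : ∀ x y y', Φ x y y' = ‖x‖ ^ 2 + 2 * ⟪x, y - y'⟫) :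
    (∀ (l : ℕ) (x : Fin l → EuclideanSpace ℝ (Fin m))
        (yv : Fin l → EuclideanSpace ℝ (Fin m)) (lam : Fin l → ℝ),
      (∀ i, 0 ≤ lam i) → (∑ i, lam i = 1) →
      ∀ y : EuclideanSpace ℝ (Fin m),
        ∑ i, ∑ j, lam i * lam j * Φ (x i - x j) (yv i) (yv j) =
          2 * ∑ i, lam i * Φ (x i - ∑ j, lam j • x j) (yv i) y) ∧
    IsKFunction m Φ := by
  have heq : ∀ (l : ℕ) (x : Fin l → EuclideanSpace ℝ (Fin m))
      (yv : Fin l → EuclideanSpace ℝ (Fin m)) (lam : Fin l → ℝ),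
      (∀ i, 0 ≤ lam i) → (∑ i, lam i = 1) →
      ∀ y : EuclideanSpace ℝ (Fin m),
        ∑ i, ∑ j, lam i * lam j * Φ (x i - x j) (yv i) (yv j) =
          2 * ∑ i, lam i * Φ (x i - ∑ j, lam j • x j) (yv i) y := by
    intro l x yv lam hnn hsum y
    have hx : ∀ v : EuclideanSpace ℝ (Fin m),
        ⟪v, ∑ j, lam j • x j⟫ = ∑ j, lam j * ⟪v, x j⟫ := by
      intro v; rw [inner_sum]; exact Finset.sum_congr rfl fun j _ => real_inner_smul_right _ _ _
    have hx' : ∀ v : EuclideanSpace ℝ (Fin m),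
        ⟪∑ j, lam j • x j, v⟫ = ∑ j, lam j * ⟪x j, v⟫ := by
      intro v; rw [sum_inner]; exact Finset.sum_congr rfl fun j _ => real_inner_smul_left _ _ _
    have hterm1 : ∀ i j, Φ (x i - x j) (yv i) (yv j) =
        (⟪x i, x i⟫ - ⟪x i, x j⟫ - ⟪x j, x i⟫ + ⟪x j, x j⟫)
          + 2*(⟪x i, yv i⟫ - ⟪x i, yv j⟫ - ⟪x j, yv i⟫ + ⟪x j, yv j⟫) := by
      intro i j
      rw [hΦ, ← real_inner_self_eq_norm_sq]
      simp only [inner_sub_left, inner_sub_right]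
      ring
    have hterm2 : ∀ i, Φ (x i - ∑ j, lam j • x j) (yv i) y =
        (⟪x i, x i⟫ - ∑ j, lam j * ⟪x i, x j⟫ - ∑ j, lam j * ⟪x j, x i⟫
            + ∑ j, lam j * ∑ k, lam k * ⟪x j, x k⟫)
          + 2*(⟪x i, yv i⟫ - ⟪x i, y⟫ - ∑ j, lam j * ⟪x j, yv i⟫ + ∑ j, lam j * ⟪x j, y⟫) := by
      intro i
      rw [hΦ, ← real_inner_self_eq_norm_sq]
      simp only [inner_sub_left, inner_sub_right]
      simp_rw [hx', hx]
      ring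
    simp_rw [hterm1, hterm2]
    exact key l lam (fun i j => ⟪x i, x j⟫) (fun i j => ⟪x i, yv j⟫) (fun i => ⟪x i, y⟫) hsum
  refine ⟨heq, ⟨?_, ?_⟩⟩
  · intro y y'
    constructor
    · have : Continuous (fun x : EuclideanSpace ℝ (Fin m) => Φ x y y') := by
        simp_rw [hΦ]
        exact ((continuous_norm.pow 2)).add
          (continuous_const.mul (continuous_id.inner continuous_const))
      exact this.lowerSemicontinuous
    · have h1 : ConvexOn ℝ Set.univ (fun x : EuclideanSpace ℝ (Fin m) => ‖x‖ ^ 2) := by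
        refine ⟨convex_univ, fun p _ q _ a b ha hb hab => ?_⟩
        have hn : ‖a • p + b • q‖ ≤ a * ‖p‖ + b * ‖q‖ := by
          calc ‖a • p + b • q‖ ≤ ‖a • p‖ + ‖b • q‖ := norm_add_le _ _
          _ = a * ‖p‖ + b * ‖q‖ := by
              rw [norm_smul, norm_smul, Real.norm_eq_abs, Real.norm_eq_abs,
                abs_of_nonneg ha, abs_of_nonneg hb]
        have hsq := pow_le_pow_left₀ (norm_nonneg _) hn 2
        simp only [smul_eq_mul]
        nlinarith [sq_nonneg (‖p‖ - ‖q‖), mul_nonneg ha hb, norm_nonneg p, norm_nonneg q]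
      have h2 : ConvexOn ℝ Set.univ (fun x : EuclideanSpace ℝ (Fin m) => 2 * ⟪x, y - y'⟫) := by
        refine ⟨convex_univ, ?_⟩
        intro p _ q _ a b _ _ _
        simp only [inner_add_left, real_inner_smul_left, smul_eq_mul]
        ring_nf
        exact le_of_eq (by ring)
      have h3 := h1.add h2
      simp_rw [hΦ]
      exact h3
  · intro l x yv lam hnn hsum y
    exact ge_of_eq (heq l x yv lam hnn hsum y)
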